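/- Let X be a metric space. Suppose there exist positive constants r, c and integers L, n such that every ball B(x,r), x ∈ X, regarded as a metric subspace, is doubling with constant L and satisfies dim_N(B(x,r),c,s) ≤ n for all s > 0. Then X has linearly controlled dimension at most n: there exist c' > 0 and s₀ > 0 such that dim_N(X,c',s) ≤ n for all 0 < s < s₀. -/

import Mathlib

open Metric Set

/-- The set `A` in a space with distance function `d` has Nagata dimension at most `n`
with constant `c` at scale `s` (written `dim_N(A,c,s) ≤ n` in the paper): there is a
cover `𝒰 = ⋃_{k=0}^n 𝒰 k` of `A` by subsets of `A`, each member having diameter at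
most `s`, such that each family `𝒰 k` is `c*s`-separated. -/
def dimNle {X : Type*} (d : X → X → ℝ) (A : Set X) (c s : ℝ) (n : ℕ) : Prop :=
  ∃ 𝒰 : Fin (n + 1) → Set (Set X),
    (∀ k, ∀ U ∈ 𝒰 k, U ⊆ A) ∧
    (∀ p ∈ A, ∃ k, ∃ U ∈ 𝒰 k, p ∈ U) ∧
    (∀ k, ∀ U ∈ 𝒰 k, ∀ a ∈ U, ∀ b ∈ U, d a b ≤ s) ∧
    (∀ k, ∀ U ∈ 𝒰 k, ∀ V ∈ 𝒰 k, U ≠ V → ∀ a ∈ U, ∀ b ∈ V, c * s ≤ d a b)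

/-- `dimAle d A C Rbar β` (written `dim_A(A,C,Rbar) ≤ β` in the paper): for all
`0 < r < R < Rbar` and every `x ∈ A`, the ball of radius `R` around `x` in `A` can be
covered by at most `C * (R/r)^β` balls of radius `r` with centers in `A`. -/
def dimAle {X : Type*} (d : X → X → ℝ) (A : Set X) (C Rbar β : ℝ) : Prop :=
  ∀ r R : ℝ, 0 < r → r < R → R < Rbar → ∀ x ∈ A,
    ∃ T : Finset X, ↑T ⊆ A ∧ (T.card : ℝ) ≤ C * (R / r) ^ β ∧
      ∀ z ∈ A, d z x < R → ∃ t ∈ T, d z t < r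

/-- `d` is a metric distance function on `Y`: symmetric, triangle inequality, and
vanishing exactly on the diagonal. -/
def IsMetricDist {Y : Type*} (d : Y → Y → ℝ) : Prop :=
  (∀ a b, d a b = d b a) ∧ (∀ a b c, d a c ≤ d a b + d b c) ∧ (∀ a b, d a b = 0 ↔ a = b)

/-- An `ε`-coupling between the pointed spaces `(A, dA, a₀)` and `(B, dB, b₀)`:
a pseudometric on the disjoint union extending `dA` and `dB`, with `d(a₀,b₀) ≤ ε`,
every point of `B_A(a₀,1/ε)` within distance `< ε` of a point of `B`, and every point
of `B_B(b₀,1/ε)` within distance `< ε` of a point of `A`. -/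
def IsCoupling {A B : Type*} (dA : A → A → ℝ) (dB : B → B → ℝ) (a₀ : A) (b₀ : B)
    (ε : ℝ) (d : A ⊕ B → A ⊕ B → ℝ) : Prop :=
  (∀ p q, d p q = d q p) ∧
  (∀ p, d p p = 0) ∧
  (∀ p q r, d p r ≤ d p q + d q r) ∧
  (∀ u v : A, d (Sum.inl u) (Sum.inl v) = dA u v) ∧
  (∀ u v : B, d (Sum.inr u) (Sum.inr v) = dB u v) ∧
  d (Sum.inl a₀) (Sum.inr b₀) ≤ ε ∧
  (∀ u : A, dA u a₀ < 1 / ε → ∃ v : B, d (Sum.inl u) (Sum.inr v) < ε) ∧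
  (∀ v : B, dB v b₀ < 1 / ε → ∃ u : A, d (Sum.inl u) (Sum.inr v) < ε)

def GoodDim {X : Type*} [MetricSpace X] (A : Set X) (n : ℕ) : Prop :=
  ∃ c' s₀ : ℝ, 0 < c' ∧ 0 < s₀ ∧ ∀ s : ℝ, 0 < s → s < s₀ →
    dimNle (fun a b : X => dist a b) A c' s n

lemma goodDim_empty {X : Type*} [MetricSpace X] (n : ℕ) : GoodDim (∅ : Set X) n :=
  ⟨1, 1, one_pos, one_pos, fun _s _ _ =>
    ⟨fun _ => ∅, fun _ _ hU => (Set.notMem_empty _ hU).elim,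
     fun _ hp => (Set.notMem_empty _ hp).elim,
     fun _ _ hU => (Set.notMem_empty _ hU).elim,
     fun _ _ hU => (Set.notMem_empty _ hU).elim⟩⟩

lemma goodDim_union {X : Type*} [MetricSpace X] {A B : Set X} {n : ℕ}
    (hA : GoodDim A n) (hB : GoodDim B n) : GoodDim (A ∪ B) n := by
  classical
  obtain ⟨c₁, s₁, hc₁, hs₁, hA⟩ := hA
  obtain ⟨c₂, s₂, hc₂, hs₂, hB⟩ := hB
  set ε : ℝ := c₁ / 12 with hεdef
  have hε : (0:ℝ) < ε := by positivity
  set K : ℝ := 1 + 2*ε + 2*c₁/3 with hKdef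
  have hK1 : (1:ℝ) ≤ K := by rw [hKdef]; linarith
  have hK0 : (0:ℝ) < K := by linarith
  refine ⟨min (c₁/6) (c₂*ε) / K, K * min s₁ (s₂/ε), by positivity, by positivity, ?_⟩
  intro σ hσ hσlt
  set s : ℝ := σ / K with hsdef
  have hs : 0 < s := by positivity
  have hσs : σ = K * s := by rw [hsdef]; field_simp
  have hsmin : s < min s₁ (s₂/ε) := by
    rw [hsdef, div_lt_iff₀ hK0]
    calc σ < K * min s₁ (s₂/ε) := hσlt
    _ = min s₁ (s₂/ε) * K := mul_comm _ _
  have hss₁ : s < s₁ := lt_of_lt_of_le hsmin (min_le_left _ _)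
  have hss₂ : ε * s < s₂ := by
    have := lt_of_lt_of_le hsmin (min_le_right _ _)
    rw [lt_div_iff₀ hε] at this; linarith [this]
  obtain ⟨𝒰, h𝒰A, h𝒰cov, h𝒰diam, h𝒰sep⟩ := hA s hs hss₁
  obtain ⟨𝒱, h𝒱B, h𝒱cov, h𝒱diam, h𝒱sep⟩ := hB (ε*s) (by positivity) hss₂
  -- closeness and choice of attachment target
  let Cl : Fin (n+1) → Set X → Prop := fun k V =>
    ∃ U, U ∈ 𝒰 k ∧ ∃ a ∈ V, ∃ b ∈ U, dist a b < c₁ * s / 3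
  let pick : Fin (n+1) → Set X → Set X := fun k V =>
    if h : Cl k V then h.choose else ∅
  have pick_mem : ∀ k V, Cl k V → pick k V ∈ 𝒰 k := by
    intro k V h
    simp only [pick, dif_pos h]
    exact h.choose_spec.1
  have pick_close : ∀ k V, Cl k V → ∃ a ∈ V, ∃ b ∈ pick k V, dist a b < c₁*s/3 := by
    intro k V h
    simp only [pick, dif_pos h]
    exact h.choose_spec.2
  let att : Fin (n+1) → Set X → Set X := fun k U =>
    {x | ∃ V, V ∈ 𝒱 k ∧ Cl k V ∧ pick k V = U ∧ x ∈ V}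
  let mg : Fin (n+1) → Set X → Set X := fun k U => U ∪ att k U
  -- any attached point is close to U
  have att_near : ∀ k U, ∀ a ∈ att k U, ∃ b₀ ∈ U, dist a b₀ ≤ ε*s + c₁*s/3 := by
    rintro k U a ⟨V, hV, hCl, hpk, haV⟩
    obtain ⟨a₀, ha₀, b₀, hb₀, hd⟩ := pick_close k V hCl
    rw [hpk] at hb₀
    refine ⟨b₀, hb₀, ?_⟩
    have h1 : dist a a₀ ≤ ε*s := h𝒱diam k V hV a haV a₀ ha₀
    calc dist a b₀ ≤ dist a a₀ + dist a₀ b₀ := dist_triangle _ _ _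
    _ ≤ ε*s + c₁*s/3 := by linarith
  have att_subB : ∀ k U, att k U ⊆ B := by
    rintro k U a ⟨V, hV, _, _, haV⟩
    exact h𝒱B k V hV haV
  -- the glued cover
  refine ⟨fun k => {W | ∃ U, U ∈ 𝒰 k ∧ W = mg k U} ∪ {V | V ∈ 𝒱 k ∧ ¬ Cl k V},
    ?_, ?_, ?_, ?_⟩
  · rintro k W (⟨U, hU, rfl⟩ | ⟨hV, _⟩)
    · rintro x (hx | hx)
      · exact Or.inl (h𝒰A k U hU hx)
      · exact Or.inr (att_subB k U hx)
    · exact fun x hx => Or.inr (h𝒱B k W hV hx)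
  · rintro p (hp | hp)
    · obtain ⟨k, U, hU, hpU⟩ := h𝒰cov p hp
      exact ⟨k, mg k U, Or.inl ⟨U, hU, rfl⟩, Or.inl hpU⟩
    · obtain ⟨k, V, hV, hpV⟩ := h𝒱cov p hp
      by_cases hCl : Cl k V
      · exact ⟨k, mg k (pick k V), Or.inl ⟨pick k V, pick_mem k V hCl, rfl⟩,
          Or.inr ⟨V, hV, hCl, rfl, hpV⟩⟩
      · exact ⟨k, V, Or.inr ⟨hV, hCl⟩, hpV⟩
  · rintro k W (⟨U, hU, rfl⟩ | ⟨hV, _⟩) a ha b hb <;> show dist a b ≤ σ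
    · rcases ha with ha | ha <;> rcases hb with hb | hb
      · have := h𝒰diam k U hU a ha b hb
        have : dist a b ≤ s := this
        rw [hσs, hKdef]; nlinarith [mul_nonneg hε.le hs.le, mul_nonneg hc₁.le hs.le, hs.le]
      · obtain ⟨b₀, hb₀, hd⟩ := att_near k U b hb
        have h1 : dist a b₀ ≤ s := h𝒰diam k U hU a ha b₀ hb₀
        have : dist a b ≤ dist a b₀ + dist b₀ b := dist_triangle _ _ _
        rw [dist_comm b₀ b] at this
        rw [hσs, hKdef]; nlinarith [mul_nonneg hε.le hs.le, mul_nonneg hc₁.le hs.le, hs.le]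
      · obtain ⟨a₀, ha₀, hd⟩ := att_near k U a ha
        have h1 : dist a₀ b ≤ s := h𝒰diam k U hU a₀ ha₀ b hb
        have : dist a b ≤ dist a a₀ + dist a₀ b := dist_triangle _ _ _
        rw [hσs, hKdef]; nlinarith [mul_nonneg hε.le hs.le, mul_nonneg hc₁.le hs.le, hs.le]
      · obtain ⟨a₀, ha₀, hda⟩ := att_near k U a ha
        obtain ⟨b₀, hb₀, hdb⟩ := att_near k U b hb
        have h1 : dist a₀ b₀ ≤ s := h𝒰diam k U hU a₀ ha₀ b₀ hb₀
        have h2 : dist a b ≤ dist a a₀ + dist a₀ b₀ + dist b₀ b :=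
          dist_triangle4 _ _ _ _
        rw [dist_comm b₀ b] at h2
        rw [hσs, hKdef]; nlinarith [mul_nonneg hε.le hs.le, mul_nonneg hc₁.le hs.le, hs.le]
    · have := h𝒱diam k W hV a ha b hb
      rw [hσs, hKdef]; nlinarith [mul_nonneg hε.le hs.le, mul_nonneg hc₁.le hs.le, hs.le]
  · -- separation
    have hconst : min (c₁/6) (c₂*ε) / K * σ = min (c₁/6) (c₂*ε) * s := by
      rw [hσs]; field_simp
    have m1 : min (c₁/6) (c₂*ε) ≤ c₁/6 := min_le_left _ _
    have m2 : min (c₁/6) (c₂*ε) ≤ c₂*ε := min_le_right _ _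
    have p1 : min (c₁/6) (c₂*ε) * s ≤ (c₁/6) * s := mul_le_mul_of_nonneg_right m1 hs.le
    have p2 : min (c₁/6) (c₂*ε) * s ≤ (c₂*ε) * s := mul_le_mul_of_nonneg_right m2 hs.le
    have hcs : 0 ≤ c₁ * s := mul_nonneg hc₁.le hs.le
    -- helper bounds
    have bUU : c₁ * s ≥ min (c₁/6) (c₂*ε) * s := by linarith
    have bVV : c₂ * (ε*s) ≥ min (c₁/6) (c₂*ε) * s := by nlinarith [p2]
    have bK : c₁ * s / 3 ≥ min (c₁/6) (c₂*ε) * s := by linarith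
    have bM : c₁ * s - (ε*s + c₁*s/3) ≥ min (c₁/6) (c₂*ε) * s := by
      rw [hεdef]; linarith
    -- main estimate: merged vs kept
    have sep_mk : ∀ k U V, U ∈ 𝒰 k → V ∈ 𝒱 k → ¬ Cl k V →
        ∀ a ∈ mg k U, ∀ b ∈ V, min (c₁/6) (c₂*ε) * s ≤ dist a b := by
      intro k U V hU hV hnc a ha b hb
      rcases ha with ha | ha
      · have : ¬ dist b a < c₁ * s / 3 := fun h => hnc ⟨U, hU, b, hb, a, ha, h⟩
        push_neg at this
        rw [dist_comm a b]; linarith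
      · obtain ⟨V', hV', hCl', _, haV'⟩ := ha
        have hne : V' ≠ V := fun h => hnc (h ▸ hCl')
        have h1 : c₂ * (ε*s) ≤ dist a b := h𝒱sep k V' hV' V hV hne a haV' b hb
        linarith
    -- merged vs merged
    have sep_mm : ∀ k U₁ U₂, U₁ ∈ 𝒰 k → U₂ ∈ 𝒰 k → U₁ ≠ U₂ →
        ∀ a ∈ mg k U₁, ∀ b ∈ mg k U₂, min (c₁/6) (c₂*ε) * s ≤ dist a b := by
      intro k U₁ U₂ hU₁ hU₂ hne a ha b hb
      rcases ha with ha | ha <;> rcases hb with hb | hb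
      · have h1 : c₁ * s ≤ dist a b := h𝒰sep k U₁ hU₁ U₂ hU₂ hne a ha b hb
        linarith
      · obtain ⟨b₀, hb₀, hd⟩ := att_near k U₂ b hb
        have h1 : c₁ * s ≤ dist a b₀ := h𝒰sep k U₁ hU₁ U₂ hU₂ hne a ha b₀ hb₀
        have h2 : dist a b₀ ≤ dist a b + dist b b₀ := dist_triangle _ _ _
        linarith
      · obtain ⟨a₀, ha₀, hd⟩ := att_near k U₁ a ha
        have h1 : c₁ * s ≤ dist a₀ b := h𝒰sep k U₁ hU₁ U₂ hU₂ hne a₀ ha₀ b hb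
        have h2 : dist a₀ b ≤ dist a₀ a + dist a b := dist_triangle _ _ _
        rw [dist_comm a₀ a] at h2
        linarith
      · obtain ⟨V₁, hV₁, hCl₁, hpk₁, haV₁⟩ := ha
        obtain ⟨V₂, hV₂, hCl₂, hpk₂, hbV₂⟩ := hb
        have hVne : V₁ ≠ V₂ := by
          rintro rfl; exact hne (hpk₁ ▸ hpk₂ ▸ rfl)
        have h1 : c₂ * (ε*s) ≤ dist a b := h𝒱sep k V₁ hV₁ V₂ hV₂ hVne a haV₁ b hbV₂
        linarith
    rintro k W₁ hW₁ W₂ hW₂ hne a ha b hb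
    show min (c₁/6) (c₂*ε) / K * σ ≤ dist a b
    rw [hconst]
    rcases hW₁ with ⟨U₁, hU₁, rfl⟩ | ⟨hV₁, hnc₁⟩ <;>
      rcases hW₂ with ⟨U₂, hU₂, rfl⟩ | ⟨hV₂, hnc₂⟩
    · have hUne : U₁ ≠ U₂ := by rintro rfl; exact hne rfl
      exact sep_mm k U₁ U₂ hU₁ hU₂ hUne a ha b hb
    · exact sep_mk k U₁ W₂ hU₁ hV₂ hnc₂ a ha b hb
    · rw [dist_comm]
      exact sep_mk k U₂ W₁ hU₂ hV₁ hnc₁ b hb a ha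
    · have h1 : c₂ * (ε*s) ≤ dist a b := h𝒱sep k W₁ hV₁ W₂ hV₂ hne a ha b hb
      exact le_trans bVV h1

/-- If every ball `B(x,r)` (as a metric subspace) is doubling with constant
`L` and has Nagata dimension at most `n` with constant `c` (at all scales), then `X` has
linearly controlled dimension at most `n`. -/
theorem lc_dim_from_uniform_balls {X : Type*} [MetricSpace X] (r c : ℝ) (L n : ℕ)
    (hr : 0 < r) (hc : 0 < c)
    (hdb : ∀ x : X, ∀ s : ℝ, 0 < s → ∀ B : Set X, B ⊆ Metric.ball x r →
      (∀ a ∈ B, ∀ b ∈ B, dist a b ≤ 2 * s) →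
      ∃ 𝒞 : Finset (Set X), 𝒞.card ≤ L ∧
        (∀ D ∈ 𝒞, D ⊆ Metric.ball x r ∧ ∀ a ∈ D, ∀ b ∈ D, dist a b ≤ s) ∧
        B ⊆ ⋃₀ (↑𝒞 : Set (Set X)))
    (hdim : ∀ x : X, ∀ s : ℝ, 0 < s →
      dimNle (fun a b : X => dist a b) (Metric.ball x r) c s n) :
    ∃ c' s₀ : ℝ, 0 < c' ∧ 0 < s₀ ∧ ∀ s : ℝ, 0 < s → s < s₀ →
      dimNle (fun a b : X => dist a b) (Set.univ : Set X) c' s n := by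
  classical
  -- Step 1: iterated coverings inside a ball
  have cover_iter : ∀ (x : X) (k : ℕ), ∀ B : Set X, B ⊆ Metric.ball x r →
      (∀ a ∈ B, ∀ b ∈ B, dist a b ≤ 2 * r) →
      ∃ 𝒞 : Finset (Set X), 𝒞.card ≤ L^(k+1) ∧
        (∀ D ∈ 𝒞, D ⊆ Metric.ball x r ∧ ∀ a ∈ D, ∀ b ∈ D, dist a b ≤ r / 2^k) ∧
        B ⊆ ⋃₀ (↑𝒞 : Set (Set X)) := by
    intro x k
    induction k with
    | zero =>
      intro B hB hdiam
      obtain ⟨𝒞, h1, h2, h3⟩ := hdb x r hr B hB hdiam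
      refine ⟨𝒞, by simpa using h1, ?_, h3⟩
      intro D hD
      refine ⟨(h2 D hD).1, ?_⟩
      intro a ha b hb
      have := (h2 D hD).2 a ha b hb
      simpa using this
    | succ k ih =>
      intro B hB hdiam
      obtain ⟨𝒞, hcard, hD, hcov⟩ := ih B hB hdiam
      have step : ∀ D ∈ 𝒞, ∃ 𝒞' : Finset (Set X), 𝒞'.card ≤ L ∧
          (∀ D' ∈ 𝒞', D' ⊆ Metric.ball x r ∧ ∀ a ∈ D', ∀ b ∈ D', dist a b ≤ r / 2^(k+1)) ∧
          D ⊆ ⋃₀ (↑𝒞' : Set (Set X)) := by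
        intro D hDm
        refine hdb x (r / 2^(k+1)) (by positivity) D (hD D hDm).1 ?_
        intro a ha b hb
        have h1 := (hD D hDm).2 a ha b hb
        have h2 : (2:ℝ) * (r / 2^(k+1)) = r / 2^k := by
          field_simp
          ring
        linarith [h2]
      choose! G hG1 hG2 hG3 using step
      refine ⟨𝒞.biUnion G, ?_, ?_, ?_⟩
      · calc (𝒞.biUnion G).card ≤ ∑ D ∈ 𝒞, (G D).card := Finset.card_biUnion_le
          _ ≤ 𝒞.card * L := by
              have := Finset.sum_le_card_nsmul 𝒞 (fun D => (G D).card) L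
                (fun D hDm => hG1 D hDm)
              simpa [smul_eq_mul] using this
          _ ≤ L^(k+1) * L := Nat.mul_le_mul_right _ hcard
          _ = L^(k+1+1) := by ring
      · intro D' hD'
        obtain ⟨D, hDm, hD'm⟩ := Finset.mem_biUnion.mp hD'
        exact hG2 D hDm D' hD'm
      · intro b hb
        obtain ⟨D, hDm, hbD⟩ := hcov hb
        obtain ⟨D', hD'm, hbD'⟩ := hG3 D (Finset.mem_coe.mp hDm) hbD
        exact ⟨D', Finset.mem_coe.mpr (Finset.mem_biUnion.mpr
          ⟨D, Finset.mem_coe.mp hDm, hD'm⟩), hbD'⟩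
  -- Step 2: separated subsets of balls are small
  have two_r : ∀ (x a b : X), a ∈ Metric.ball x r → b ∈ Metric.ball x r →
      dist a b ≤ 2 * r := by
    intro x a b ha hb
    have ha' := mem_ball.mp ha
    have hb' := mem_ball.mp hb
    have h1 := dist_triangle a x b
    have h2 : dist x b = dist b x := dist_comm x b
    linarith
  have sep_fin : ∀ (x : X) (S : Set X), S ⊆ Metric.ball x r →
      (∀ a ∈ S, ∀ b ∈ S, a ≠ b → r/8 ≤ dist a b) → S.Finite ∧ S.ncard ≤ L^5 := by
    intro x S hS hsep
    obtain ⟨𝒞, hcard, hD, hcov⟩ := cover_iter x 4 S hS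
      (fun a ha b hb => two_r x a b (hS ha) (hS hb))
    have pick : ∀ a ∈ S, ∃ D ∈ 𝒞, a ∈ D := by
      intro a ha
      obtain ⟨D, hDc, haD⟩ := hcov ha
      exact ⟨D, Finset.mem_coe.mp hDc, haD⟩
    choose! f hf1 hf2 using pick
    have hinj : S.InjOn f := by
      intro a ha b hb hfe
      by_contra hne
      have h1 := hf2 a ha
      have h2 := hf2 b hb
      rw [hfe] at h1
      have hd := (hD (f b) (hf1 b hb)).2 a h1 b h2
      have h8 := hsep a ha b hb hne
      have : (2:ℝ)^4 = 16 := by norm_num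
      rw [this] at hd
      linarith
    have himg : f '' S ⊆ ↑𝒞 := by
      rintro _ ⟨a, ha, rfl⟩
      exact Finset.mem_coe.mpr (hf1 a ha)
    have hfin : S.Finite := Set.Finite.of_finite_image (𝒞.finite_toSet.subset himg) hinj
    refine ⟨hfin, ?_⟩
    have e1 : S.ncard = (f '' S).ncard := (Set.ncard_image_of_injOn hinj).symm
    have e2 : (f '' S).ncard ≤ (↑𝒞 : Set (Set X)).ncard :=
      Set.ncard_le_ncard himg 𝒞.finite_toSet
    rw [Set.ncard_coe_finset] at e2
    have h45 : L^(4+1) = L^5 := by norm_num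
    omega
  -- Step 3: a maximal (r/8)-separated net
  have hzorn : ∀ cc ⊆ {S : Set X | ∀ a ∈ S, ∀ b ∈ S, a ≠ b → r/8 ≤ dist a b},
      IsChain (· ⊆ ·) cc → ∃ ub ∈ {S : Set X | ∀ a ∈ S, ∀ b ∈ S, a ≠ b → r/8 ≤ dist a b},
        ∀ s ∈ cc, s ⊆ ub := by
    intro cc hcsub hchain
    refine ⟨⋃₀ cc, ?_, fun s hs => subset_sUnion_of_mem hs⟩
    rintro a ⟨Sa, hSa, haa⟩ b ⟨Sb, hSb, hbb⟩ hne
    rcases hchain.total hSa hSb with hsub | hsub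
    · exact hcsub hSb a (hsub haa) b hbb hne
    · exact hcsub hSa a haa b (hsub hbb) hne
  obtain ⟨N, hNmax⟩ := zorn_subset
      {S : Set X | ∀ a ∈ S, ∀ b ∈ S, a ≠ b → r/8 ≤ dist a b} hzorn
  have hNsep : ∀ a ∈ N, ∀ b ∈ N, a ≠ b → r/8 ≤ dist a b := hNmax.prop
  have hNnet : ∀ x : X, ∃ y ∈ N, dist x y < r/8 := by
    intro x
    by_contra h
    push_neg at h
    have hins : insert x N ∈ {S : Set X | ∀ a ∈ S, ∀ b ∈ S, a ≠ b → r/8 ≤ dist a b} := by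
      rintro a (rfl | ha) b (rfl | hb) hne
      · exact absurd rfl hne
      · exact h b hb
      · rw [dist_comm]; exact h a ha
      · exact hNsep a ha b hb hne
    have hsub : insert x N ⊆ N := hNmax.2 hins (Set.subset_insert x N)
    have hx : x ∈ N := hsub (Set.mem_insert x N)
    have := h x hx
    rw [dist_self] at this
    linarith
  -- Step 4: bounded degree
  have deg : ∀ v : X, ({w | w ∈ N ∧ dist w v < r}).Finite ∧
      ({w | w ∈ N ∧ dist w v < r}).ncard ≤ L^5 := by
    intro v
    exact sep_fin v _ (fun w hw => mem_ball.mpr hw.2)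
      (fun a ha b hb hne => hNsep a ha.1 b hb.1 hne)
  -- Step 5: coloring with M = L^5 + 1 colors
  set M : ℕ := L^5 + 1 with hM
  obtain ⟨col, hcolM, col_sep⟩ : ∃ col : X → ℕ, (∀ v, col v < M) ∧
      (∀ a ∈ N, ∀ b ∈ N, a ≠ b → col a = col b → r ≤ dist a b) := by
    have wf : WellFounded (WellOrderingRel : X → X → Prop) := IsWellFounded.wf
    set F : ∀ v : X, (∀ w, WellOrderingRel w v → ℕ) → ℕ :=
      fun v f => sInf {m | m < M ∧ ∀ w, ∀ hw : WellOrderingRel w v,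
        w ∈ N → dist w v < r → w ≠ v → f w hw ≠ m} with hF
    set col : X → ℕ := wf.fix F with hcol
    have hfix : ∀ v, col v = sInf {m | m < M ∧ ∀ w, ∀ _ : WellOrderingRel w v,
        w ∈ N → dist w v < r → w ≠ v → col w ≠ m} := by
      intro v
      rw [hcol]
      conv_lhs => rw [WellFounded.fix_eq]
    have hmem : ∀ v, col v ∈ {m | m < M ∧ ∀ w, ∀ _ : WellOrderingRel w v,
        w ∈ N → dist w v < r → w ≠ v → col w ≠ m} := by
      intro v
      rw [hfix v]
      apply Nat.sInf_mem
      set E := {w | (w ∈ N ∧ dist w v < r) ∧ WellOrderingRel w v ∧ w ≠ v} with hE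
      have hEsub : E ⊆ {w | w ∈ N ∧ dist w v < r} := fun w hw => hw.1
      have hEfin : E.Finite := (deg v).1.subset hEsub
      have hIm : (col '' E).ncard ≤ L^5 :=
        le_trans (Set.ncard_image_le hEfin)
          (le_trans (Set.ncard_le_ncard hEsub (deg v).1) (deg v).2)
      have hex : ∃ m, m < M ∧ m ∉ col '' E := by
        by_contra hcon
        push_neg at hcon
        have hsub : (↑(Finset.range M) : Set ℕ) ⊆ col '' E := by
          intro m hm
          exact hcon m (Finset.mem_range.mp (Finset.mem_coe.mp hm))
        have h1 : M ≤ (col '' E).ncard := by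
          have := Set.ncard_le_ncard hsub (hEfin.image col)
          rwa [Set.ncard_coe_finset, Finset.card_range] at this
        omega
      obtain ⟨m, hm1, hm2⟩ := hex
      exact ⟨m, hm1, fun w hw hwN hwd hwne heq => hm2 ⟨w, ⟨⟨hwN, hwd⟩, hw, hwne⟩, heq⟩⟩
    refine ⟨col, fun v => (hmem v).1, ?_⟩
    intro a ha b hb hne hcoleq
    by_contra hlt
    push_neg at hlt
    rcases trichotomous_of WellOrderingRel a b with h1 | h1 | h1
    · exact (hmem b).2 a h1 ha hlt hne hcoleq
    · exact hne h1
    · exact (hmem a).2 b h1 hb (by rw [dist_comm]; exact hlt) (Ne.symm hne) hcoleq.symm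
  -- Step 6: the monochromatic pieces
  set Am : ℕ → Set X := fun m => ⋃ i ∈ {i | i ∈ N ∧ col i = m}, Metric.ball i (r/8)
    with hAm
  have pieceGood : ∀ m : ℕ, GoodDim (Am m) n := by
    intro m
    refine ⟨c, 3*r/(4*c), hc, by positivity, ?_⟩
    intro s hs hslt
    have hcs : c * s < 3*r/4 := by
      have h4 : s * (4*c) < 3*r := (lt_div_iff₀ (by positivity)).mp hslt
      nlinarith
    have H : ∀ i : X, ∃ 𝒰 : Fin (n+1) → Set (Set X),
        (∀ k, ∀ U ∈ 𝒰 k, U ⊆ Metric.ball i r) ∧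
        (∀ p ∈ Metric.ball i r, ∃ k, ∃ U ∈ 𝒰 k, p ∈ U) ∧
        (∀ k, ∀ U ∈ 𝒰 k, ∀ a ∈ U, ∀ b ∈ U, dist a b ≤ s) ∧
        (∀ k, ∀ U ∈ 𝒰 k, ∀ V ∈ 𝒰 k, U ≠ V → ∀ a ∈ U, ∀ b ∈ V, c * s ≤ dist a b) :=
      fun i => hdim i s hs
    choose 𝒰 h1 h2 h3 h4 using H
    refine ⟨fun k => {W | ∃ i, (i ∈ N ∧ col i = m) ∧
      ∃ U ∈ 𝒰 i k, W = U ∩ Metric.ball i (r/8)}, ?_, ?_, ?_, ?_⟩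
    · rintro k W ⟨i, hi, U, hU, rfl⟩ x ⟨_, hxb⟩
      exact Set.mem_biUnion hi hxb
    · intro p hp
      rw [hAm] at hp
      simp only [Set.mem_iUnion, Set.mem_setOf_eq, exists_prop] at hp
      obtain ⟨i, hi, hpball⟩ := hp
      have hpr : p ∈ Metric.ball i r := by
        have := mem_ball.mp hpball
        exact mem_ball.mpr (by linarith)
      obtain ⟨k, U, hU, hpU⟩ := h2 i p hpr
      exact ⟨k, U ∩ Metric.ball i (r/8), ⟨i, hi, U, hU, rfl⟩, hpU, hpball⟩
    · rintro k W ⟨i, hi, U, hU, rfl⟩ a ⟨haU, _⟩ b ⟨hbU, _⟩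
      exact h3 i k U hU a haU b hbU
    · rintro k W₁ ⟨i, ⟨hiN, hicol⟩, U, hU, rfl⟩ W₂ ⟨j, ⟨hjN, hjcol⟩, U', hU', rfl⟩
        hne a ⟨haU, haB⟩ b ⟨hbU, hbB⟩
      show c * s ≤ dist a b
      by_cases hij : i = j
      · subst hij
        have hUne : U ≠ U' := by
          rintro rfl; exact hne rfl
        exact h4 i k U hU U' hU' hUne a haU b hbU
      · have hd : r ≤ dist i j := col_sep i hiN j hjN hij (hicol.trans hjcol.symm)
        have ha' := mem_ball.mp haB
        have hb' := mem_ball.mp hbB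
        have t1 : dist i j ≤ dist i a + dist a b + dist b j := dist_triangle4 i a b j
        have t2 : dist i a = dist a i := dist_comm i a
        have t3 : dist b j = dist b j := rfl
        have hbj : dist b j < r/8 := hb'
        have hai : dist a i < r/8 := ha'
        linarith
  -- Step 7: glue finitely many pieces
  have unionGood : ∀ k : ℕ, GoodDim (⋃ m ∈ Finset.range k, Am m) n := by
    intro k
    induction k with
    | zero => simpa using goodDim_empty (X := X) n
    | succ k ih =>
      rw [Finset.range_add_one, Finset.set_biUnion_insert]
      exact goodDim_union (pieceGood k) ih
  have hcover : (⋃ m ∈ Finset.range M, Am m) = Set.univ := by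
    apply Set.eq_univ_of_forall
    intro x
    obtain ⟨y, hyN, hy⟩ := hNnet x
    refine Set.mem_biUnion (Finset.mem_range.mpr (hcolM y)) ?_
    exact Set.mem_biUnion ⟨hyN, rfl⟩ (mem_ball.mpr hy)
  have := unionGood M
  rw [hcover] at this
  exact this
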